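/- In the Banach space c₀, let x_n = Σ_{i=1}^{n} δ_i for each n ∈ ℕ, where (δ_i) is the standard unit vector basis. Then the set {x_n : n ∈ ℕ} is (p,q)-multi-bounded in c₀ for every pair p,q with 1 ≤ p < q < ∞, but {x_n : n ∈ ℕ} is not relatively weakly compact (its closure in the weak topology of c₀ is not compact). -/

import Mathlib

open ZeroAtInfty NormedSpace
open Topology

/-- The standard basis vector `δₙ` of `c₀ = C₀(ℕ, ℂ)`. -/
noncomputable def c0delta (n : ℕ) : C₀(ℕ, ℂ) :=
  ⟨⟨fun m => if m = n then 1 else 0, continuous_of_discreteTopology⟩, by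
    simp only [ContinuousMap.coe_mk]
    rw [Filter.cocompact_eq_cofinite ℕ]
    apply Filter.Tendsto.congr' (f₁ := fun _ => (0 : ℂ))
    · rw [Filter.eventuallyEq_iff_exists_mem]
      exact ⟨{m | m ≠ n}, by simp [Filter.mem_cofinite], fun m hm => (if_neg hm).symm⟩
    · exact tendsto_const_nhds⟩

/-- The weak `p`-summing norm `μ_{p,n}` of a tuple of functionals on `E`,
computed over the unit ball of `E`. -/
noncomputable def muPN {E : Type*} [NormedAddCommGroup E] [NormedSpace ℂ E]
    (p : ℝ) {n : ℕ} (lam : Fin n → StrongDual ℂ E) : ℝ :=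
  sSup {r : ℝ | ∃ x : E, ‖x‖ ≤ 1 ∧ r = (∑ i, ‖lam i x‖ ^ p) ^ (1 / p)}

/-- The `(p,q)`-multi-norm of a tuple `(x₁,…,xₙ)` in `E`. -/
noncomputable def pqNorm {E : Type*} [NormedAddCommGroup E] [NormedSpace ℂ E]
    (p q : ℝ) {n : ℕ} (x : Fin n → E) : ℝ :=
  sSup {r : ℝ | ∃ lam : Fin n → StrongDual ℂ E, muPN p lam ≤ 1 ∧
    r = (∑ i, ‖lam i (x i)‖ ^ q) ^ (1 / q)}

namespace PSaux

noncomputable def XX (n : ℕ) : C₀(ℕ, ℂ) := ∑ j ∈ Finset.range n, c0delta j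

lemma sum_apply (s : Finset ℕ) (f : ℕ → C₀(ℕ, ℂ)) (m : ℕ) :
    (∑ j ∈ s, f j) m = ∑ j ∈ s, f j m := by
  classical
  induction s using Finset.induction_on with
  | empty => simp
  | insert _ _ h ih =>
      rw [Finset.sum_insert h, Finset.sum_insert h,
        ZeroAtInftyContinuousMap.coe_add, Pi.add_apply, ih]

lemma XX_apply (n m : ℕ) : XX n m = if m < n then 1 else 0 := by
  have hc : ∀ j, c0delta j m = if m = j then (1:ℂ) else 0 := fun j => rfl
  rw [XX, sum_apply]
  simp only [hc]
  rw [Finset.sum_ite_eq]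
  simp [Finset.mem_range]

lemma XX_zero : XX 0 = 0 := by
  rw [XX]; simp

lemma XX_sub_apply {u v : ℕ} (h : u ≤ v) (m : ℕ) :
    (XX v - XX u) m = if u ≤ m ∧ m < v then 1 else 0 := by
  rw [ZeroAtInftyContinuousMap.coe_sub, Pi.sub_apply, XX_apply, XX_apply]
  split_ifs with h1 h2 h3 h4 h5 <;> (try norm_num) <;> omega

lemma norm_signed_le (f : ℕ → ℕ) (hf : Monotone f) (R : ℕ) (ε : ℕ → ℂ)
    (hε : ∀ r, ‖ε r‖ ≤ 1) :
    ‖∑ r ∈ Finset.range R, ε r • (XX (f (2*r+1)) - XX (f (2*r)))‖ ≤ 1 := by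
  rw [← ZeroAtInftyContinuousMap.norm_toBCF_eq_norm]
  refine (BoundedContinuousFunction.norm_le zero_le_one).2 fun m => ?_
  have happ : (∑ r ∈ Finset.range R, ε r • (XX (f (2*r+1)) - XX (f (2*r)))).toBCF m
      = ∑ r ∈ Finset.range R, ε r * (if f (2*r) ≤ m ∧ m < f (2*r+1) then 1 else 0) := by
    show (∑ r ∈ Finset.range R, ε r • (XX (f (2*r+1)) - XX (f (2*r)))) m = _
    rw [sum_apply]
    refine Finset.sum_congr rfl fun r _ => ?_
    rw [ZeroAtInftyContinuousMap.coe_smul, Pi.smul_apply,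
      XX_sub_apply (hf (by omega)), smul_eq_mul]
  rw [happ]
  have hco : ∑ r ∈ Finset.range R, ε r * (if f (2*r) ≤ m ∧ m < f (2*r+1) then 1 else 0)
      = ∑ r ∈ (Finset.range R).filter (fun r => f (2*r) ≤ m ∧ m < f (2*r+1)), ε r := by
    rw [Finset.sum_filter]
    refine Finset.sum_congr rfl fun r _ => ?_
    split_ifs <;> simp
  rw [hco]
  set A := (Finset.range R).filter (fun r => f (2*r) ≤ m ∧ m < f (2*r+1)) with hA
  have hcard : A.card ≤ 1 := by
    refine Finset.card_le_one.2 fun r hr r' hr' => ?_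
    simp only [hA, Finset.mem_filter] at hr hr'
    by_contra hne
    rcases Nat.lt_or_ge r r' with hlt | hge
    · have : f (2*r+1) ≤ f (2*r') := hf (by omega)
      omega
    · have hlt : r' < r := by omega
      have : f (2*r'+1) ≤ f (2*r) := hf (by omega)
      omega
  calc ‖∑ r ∈ A, ε r‖ ≤ ∑ r ∈ A, ‖ε r‖ := norm_sum_le _ _
    _ ≤ ∑ _r ∈ A, (1:ℝ) := Finset.sum_le_sum fun r _ => hε r
    _ = (A.card : ℝ) := by simp
    _ ≤ 1 := by exact_mod_cast hcard

noncomputable def sgn (b : Bool) : ℂ := if b then 1 else -1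

lemma norm_sgn (b : Bool) : ‖sgn b‖ = 1 := by cases b <;> simp [sgn]

lemma sgn_add_not (b : Bool) : sgn b + sgn (!b) = 0 := by cases b <;> simp [sgn]

lemma two_convex {p a b c : ℝ} (hp : 1 ≤ p) (ha : 0 ≤ a) (hb : 0 ≤ b) (hc : 0 ≤ c)
    (h : 2 * c ≤ a + b) : 2 * c ^ p ≤ a ^ p + b ^ p := by
  have hmean : c ^ p ≤ (1/2) * a ^ p + (1/2) * b ^ p := by
    calc c ^ p ≤ ((1/2) * a + (1/2) * b) ^ p := by
          apply Real.rpow_le_rpow hc (by linarith) (by linarith)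
      _ ≤ (1/2) * a ^ p + (1/2) * b ^ p := by
          have h2 := Real.rpow_arith_mean_le_arith_mean_rpow (Finset.univ : Finset (Fin 2))
            ![1/2, 1/2] ![a, b] (by intro i _; fin_cases i <;> norm_num)
            (by simp [Fin.sum_univ_succ]; norm_num) (by intro i _; fin_cases i <;> simpa) hp
          simpa [Fin.sum_univ_succ] using h2
  linarith

/-- Sign-averaging lemma (Lemma A). -/
lemma signAvg {k R : ℕ} (lam : Fin k → StrongDual ℂ C₀(ℕ, ℂ)) {p : ℝ} (hp : 1 ≤ p)
    (H : ∀ y : C₀(ℕ, ℂ), ‖y‖ ≤ 1 → ∑ i, ‖lam i y‖ ^ p ≤ 1)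
    (f : ℕ → ℕ) (hf : Monotone f) (r : Fin k → ℕ) (hr : ∀ i, r i < R) :
    ∑ i, ‖lam i (XX (f (2 * r i + 1)) - XX (f (2 * r i)))‖ ^ p ≤ 1 := by
  classical
  set w : ℕ → C₀(ℕ, ℂ) := fun t => XX (f (2*t+1)) - XX (f (2*t)) with hw
  set ε : (Fin R → Bool) → ℕ → ℂ :=
    fun σ t => if h : t < R then sgn (σ ⟨t, h⟩) else 1 with hε
  set z : (Fin R → Bool) → C₀(ℕ, ℂ) :=
    fun σ => ∑ t ∈ Finset.range R, ε σ t • w t with hz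
  have hεnorm : ∀ σ t, ‖ε σ t‖ ≤ 1 := by
    intro σ t
    by_cases h : t < R
    · have he : ε σ t = sgn (σ ⟨t, h⟩) := dif_pos h
      rw [he, norm_sgn]
    · have he : ε σ t = 1 := dif_neg h
      rw [he]; simp
  have hznorm : ∀ σ, ‖z σ‖ ≤ 1 := fun σ => norm_signed_le f hf R (ε σ) (hεnorm σ)
  have hg0 : ∀ i σ, (0:ℝ) ≤ ‖lam i (z σ)‖ ^ p := fun i σ => Real.rpow_nonneg (norm_nonneg _) _
  have key : ∀ i : Fin k, (Fintype.card (Fin R → Bool) : ℝ) * ‖lam i (w (r i))‖ ^ p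
      ≤ ∑ σ : Fin R → Bool, ‖lam i (z σ)‖ ^ p := by
    intro i
    set r₀ : Fin R := ⟨r i, hr i⟩ with hr₀
    set φ : (Fin R → Bool) → (Fin R → Bool) :=
      fun σ t => if t = r₀ then σ t else !(σ t) with hφ
    have hinv : Function.Involutive φ := by
      intro σ; funext t; rw [hφ]; by_cases h : t = r₀ <;> simp [h]
    have hzz : ∀ σ, z σ + z (φ σ) = (2 * sgn (σ r₀)) • w (r i) := by
      intro σ
      rw [hz, ← Finset.sum_add_distrib]
      have : ∀ t ∈ Finset.range R, ε σ t • w t + ε (φ σ) t • w t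
          = if t = (r i) then (2 * sgn (σ r₀)) • w (r i) else 0 := by
        intro t ht
        have htR : t < R := Finset.mem_range.1 ht
        rw [(add_smul (ε σ t) (ε (φ σ) t) (w t)).symm]
        have hεσ : ε σ t = sgn (σ ⟨t, htR⟩) := dif_pos htR
        have hεφ : ε (φ σ) t = sgn (φ σ ⟨t, htR⟩) := dif_pos htR
        rw [hεσ, hεφ]
        by_cases hti : t = r i
        · have he : (⟨t, htR⟩ : Fin R) = r₀ := Fin.ext hti
          have hφσ : φ σ ⟨t, htR⟩ = σ ⟨t, htR⟩ := by
            show (if (⟨t, htR⟩ : Fin R) = r₀ then σ ⟨t, htR⟩ else !(σ ⟨t, htR⟩)) = _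
            rw [if_pos he]
          rw [if_pos hti, hφσ, he, hti, ← two_mul]
        · have hne : (⟨t, htR⟩ : Fin R) ≠ r₀ := by
            rw [hr₀]; intro hcc; exact hti (by simpa using congrArg Fin.val hcc)
          have hφσ : φ σ ⟨t, htR⟩ = !(σ ⟨t, htR⟩) := by
            show (if (⟨t, htR⟩ : Fin R) = r₀ then σ ⟨t, htR⟩ else !(σ ⟨t, htR⟩)) = _
            rw [if_neg hne]
          rw [if_neg hti, hφσ, sgn_add_not, zero_smul]
      rw [Finset.sum_congr rfl this, Finset.sum_ite_eq' (Finset.range R)]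
      rw [if_pos (Finset.mem_range.2 (hr i))]
    have h2c : ∀ σ, 2 * ‖lam i (w (r i))‖ ^ p
        ≤ ‖lam i (z σ)‖ ^ p + ‖lam i (z (φ σ))‖ ^ p := by
      intro σ
      refine two_convex hp (norm_nonneg _) (norm_nonneg _) (norm_nonneg _) ?_
      have heq : lam i (z σ) + lam i (z (φ σ)) = (2 * sgn (σ r₀)) • lam i (w (r i)) := by
        rw [← map_add, hzz σ, map_smul]
      have hnn : ‖lam i (z σ) + lam i (z (φ σ))‖ = 2 * ‖lam i (w (r i))‖ := by
        rw [heq, norm_smul]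
        have : ‖(2 : ℂ) * sgn (σ r₀)‖ = 2 := by
          rw [norm_mul, norm_sgn]; simp
        rw [this]
      calc 2 * ‖lam i (w (r i))‖ = ‖lam i (z σ) + lam i (z (φ σ))‖ := hnn.symm
        _ ≤ ‖lam i (z σ)‖ + ‖lam i (z (φ σ))‖ := norm_add_le _ _
    have hsum2 : ∑ σ : Fin R → Bool, (2 * ‖lam i (w (r i))‖ ^ p)
        ≤ ∑ σ : Fin R → Bool, (‖lam i (z σ)‖ ^ p + ‖lam i (z (φ σ))‖ ^ p) :=
      Finset.sum_le_sum fun σ _ => h2c σ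
    have hperm : ∑ σ : Fin R → Bool, ‖lam i (z (φ σ))‖ ^ p
        = ∑ σ : Fin R → Bool, ‖lam i (z σ)‖ ^ p :=
      Equiv.sum_comp hinv.toPerm (fun σ => ‖lam i (z σ)‖ ^ p)
    rw [Finset.sum_add_distrib, hperm, Finset.sum_const, Finset.card_univ] at hsum2
    simp only [Finset.sum_const, Finset.card_univ, nsmul_eq_mul] at hsum2
    nlinarith [hsum2]
  have hcard : (0:ℝ) < (Fintype.card (Fin R → Bool) : ℝ) := by
    exact_mod_cast Fintype.card_pos
  have hmain : (Fintype.card (Fin R → Bool) : ℝ) * ∑ i, ‖lam i (w (r i))‖ ^ p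
      ≤ (Fintype.card (Fin R → Bool) : ℝ) * 1 := by
    calc (Fintype.card (Fin R → Bool) : ℝ) * ∑ i, ‖lam i (w (r i))‖ ^ p
        = ∑ i, (Fintype.card (Fin R → Bool) : ℝ) * ‖lam i (w (r i))‖ ^ p := by
          rw [Finset.mul_sum]
      _ ≤ ∑ i, ∑ σ : Fin R → Bool, ‖lam i (z σ)‖ ^ p := Finset.sum_le_sum fun i _ => key i
      _ = ∑ σ : Fin R → Bool, ∑ i, ‖lam i (z σ)‖ ^ p := Finset.sum_comm
      _ ≤ ∑ _σ : Fin R → Bool, (1:ℝ) := Finset.sum_le_sum fun σ _ => H (z σ) (hznorm σ)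
      _ = (Fintype.card (Fin R → Bool) : ℝ) * 1 := by simp
  exact le_of_mul_le_mul_left hmain hcard

lemma minkowski_iter {ι : Type*} (S : Finset ι) {p : ℝ} (hp : 1 ≤ p) (T : ℕ)
    (B : ι → ℕ → ℝ) (hB : ∀ i m, 0 ≤ B i m) :
    (∑ i ∈ S, (∑ m ∈ Finset.range T, B i m) ^ p) ^ (1/p)
      ≤ ∑ m ∈ Finset.range T, (∑ i ∈ S, (B i m) ^ p) ^ (1/p) := by
  have hp0 : 0 < p := lt_of_lt_of_le one_pos hp
  induction T with
  | zero =>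
      simp only [Finset.range_zero, Finset.sum_empty]
      rw [Real.zero_rpow hp0.ne', Finset.sum_const, smul_zero, Real.zero_rpow]
      positivity
  | succ T ih =>
      have hL := Real.Lp_add_le S (fun i => ∑ m ∈ Finset.range T, B i m)
        (fun i => B i T) hp
      have habs1 : ∀ i ∈ S, |(∑ m ∈ Finset.range T, B i m) + B i T| ^ p
          = (∑ m ∈ Finset.range (T+1), B i m) ^ p := by
        intro i _
        rw [abs_of_nonneg (add_nonneg (Finset.sum_nonneg fun m _ => hB i m) (hB i T)),
          ← Finset.sum_range_succ]
      have habs2 : ∀ i ∈ S, |∑ m ∈ Finset.range T, B i m| ^ p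
          = (∑ m ∈ Finset.range T, B i m) ^ p := by
        intro i _; rw [abs_of_nonneg (Finset.sum_nonneg fun m _ => hB i m)]
      have habs3 : ∀ i ∈ S, |B i T| ^ p = (B i T) ^ p := by
        intro i _; rw [abs_of_nonneg (hB i T)]
      rw [Finset.sum_congr rfl habs1, Finset.sum_congr rfl habs2,
        Finset.sum_congr rfl habs3] at hL
      calc (∑ i ∈ S, (∑ m ∈ Finset.range (T+1), B i m) ^ p) ^ (1/p)
          ≤ (∑ i ∈ S, (∑ m ∈ Finset.range T, B i m) ^ p) ^ (1/p)
            + (∑ i ∈ S, (B i T) ^ p) ^ (1/p) := hL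
        _ ≤ (∑ m ∈ Finset.range T, (∑ i ∈ S, (B i m) ^ p) ^ (1/p))
            + (∑ i ∈ S, (B i T) ^ p) ^ (1/p) := by
              exact add_le_add ih le_rfl
        _ = ∑ m ∈ Finset.range (T+1), (∑ i ∈ S, (B i m) ^ p) ^ (1/p) := by
              rw [Finset.sum_range_succ]

/-- The key dyadic lemma. -/
lemma keyLemma {k : ℕ} (lam : Fin k → StrongDual ℂ C₀(ℕ, ℂ)) {p : ℝ} (hp : 1 ≤ p)
    (H : ∀ y : C₀(ℕ, ℂ), ‖y‖ ≤ 1 → ∑ i, ‖lam i y‖ ^ p ≤ 1)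
    (n : Fin k → ℕ) (S : Finset (Fin k)) :
    ∑ i ∈ S, ‖lam i (XX (n i))‖ ^ p ≤ ((Nat.clog 2 S.card + 1 : ℕ) : ℝ) ^ p := by
  classical
  have hp0 : 0 < p := lt_of_lt_of_le one_pos hp
  rcases S.eq_empty_or_nonempty with hSe | hSne
  · rw [hSe]
    simp only [Finset.sum_empty]
    positivity
  · set V := S.image n with hV
    have hVne : V.Nonempty := hSne.image n
    set s := V.card with hs
    have hs1 : 1 ≤ s := Finset.card_pos.2 hVne
    set e := V.orderEmbOfFin hs.symm with he
    set d : ℕ → ℕ := fun l => if hl : l = 0 then 0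
      else (e ⟨min (l-1) (s-1), by omega⟩ : ℕ) with hd
    have hd0 : d 0 = 0 := dif_pos rfl
    have hdpos : ∀ l, 0 < l → d l = e ⟨min (l-1) (s-1), by omega⟩ :=
      fun l hl => dif_neg (Nat.pos_iff_ne_zero.1 hl)
    have hdmono : Monotone d := by
      intro l l' hll
      by_cases hl : l = 0
      · rw [hl, hd0]; exact Nat.zero_le _
      · have hl0 : 0 < l := Nat.pos_of_ne_zero hl
        have hl0' : 0 < l' := lt_of_lt_of_le hl0 hll
        rw [hdpos l hl0, hdpos l' hl0']
        exact e.monotone (by simp only [Fin.mk_le_mk]; omega)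
    have hex : ∀ i ∈ S, ∃ ti : Fin s, (e ti : ℕ) = n i := by
      intro i hi
      have hni : n i ∈ V := Finset.mem_image_of_mem n hi
      have : (n i : ℕ) ∈ Set.range e := by
        rw [Finset.range_orderEmbOfFin]
        exact hni
      obtain ⟨ti, hti⟩ := this
      exact ⟨ti, hti⟩
    set t : Fin k → Fin s := fun i =>
      if h : ∃ ti : Fin s, (e ti : ℕ) = n i then h.choose else ⟨0, hs1⟩ with hgt
    have het : ∀ i ∈ S, (e (t i) : ℕ) = n i := by
      intro i hi
      have h := hex i hi
      simp only [hgt, dif_pos h]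
      exact h.choose_spec
    set T : Fin k → ℕ := fun i => (t i : ℕ) + 1 with hgT
    have hTs : ∀ i, T i ≤ s := fun i => (t i).isLt
    have hT0 : ∀ i, 0 < T i := fun i => Nat.succ_pos _
    have hdT : ∀ i ∈ S, d (T i) = n i := by
      intro i hi
      rw [hdpos (T i) (hT0 i)]
      have harg : min (T i - 1) (s-1) = (t i : ℕ) := by
        have := (t i).isLt
        simp only [hgT]
        omega
      rw [← het i hi]
      congr 1
      exact Fin.ext harg
    set M := Nat.clog 2 s with hM
    have hsM : s ≤ 2 ^ M := Nat.le_pow_clog one_lt_two s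
    set g : Fin k → ℕ → C₀(ℕ, ℂ) := fun i m => XX (d (2^m * (T i / 2^m))) with hgg
    have htel : ∀ i ∈ S, XX (n i) = ∑ m ∈ Finset.range (M+1), (g i m - g i (m+1)) := by
      intro i hi
      rw [Finset.sum_range_sub' (fun m => g i m) (M+1)]
      have hg0 : g i 0 = XX (n i) := by
        simp only [hgg, pow_zero, Nat.div_one, one_mul]
        rw [hdT i hi]
      have hgM : g i (M+1) = 0 := by
        simp only [hgg]
        have : T i / 2^(M+1) = 0 := by
          apply Nat.div_eq_of_lt
          calc T i ≤ s := hTs i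
            _ ≤ 2^M := hsM
            _ < 2^(M+1) := Nat.pow_lt_pow_succ one_lt_two
        rw [this, Nat.mul_zero, hd0, XX_zero]
      rw [hg0, hgM, sub_zero]
    set B : Fin k → ℕ → ℝ := fun i m => ‖lam i (g i m - g i (m+1))‖ with hB
    have hBnn : ∀ i m, 0 ≤ B i m := fun i m => norm_nonneg _
    have ham : ∀ i ∈ S, ‖lam i (XX (n i))‖ ≤ ∑ m ∈ Finset.range (M+1), B i m := by
      intro i hi
      rw [htel i hi, map_sum]
      exact norm_sum_le _ _
    have hscale : ∀ m, ∑ i ∈ S, (B i m) ^ p ≤ 1 := by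
      intro m
      set rr : Fin k → ℕ := fun i => T i / 2^(m+1) with hrr
      have hrrR : ∀ i, rr i < s + 1 := by
        intro i
        have h1 : rr i ≤ T i := Nat.div_le_self _ _
        have h2 := hTs i
        omega
      have hA := signAvg lam hp H (fun l => d (2^m * l))
        (hdmono.comp (fun a b hab => Nat.mul_le_mul_left _ hab)) rr hrrR
      refine le_trans (Finset.sum_le_sum ?_) (le_trans
        (Finset.sum_le_sum_of_subset_of_nonneg (Finset.subset_univ S)
          (fun i _ _ => Real.rpow_nonneg (norm_nonneg _) _)) hA)
      intro i _
      refine Real.rpow_le_rpow (hBnn i m) ?_ hp0.le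
      have hsplit : T i / 2^m = 2 * rr i + (T i / 2^m) % 2 := by
        have h1 : rr i = T i / 2^m / 2 := by
          show T i / 2^(m+1) = _
          rw [Nat.div_div_eq_div_mul, ← pow_succ]
        rw [h1]
        omega
      have hg1 : g i (m+1) = XX (d (2^m * (2 * rr i))) := by
        simp only [hgg, hrr]
        congr 2
        rw [pow_succ]
        ring
      rcases Nat.mod_two_eq_zero_or_one (T i / 2^m) with hbit | hbit
      · have hgm : g i m = XX (d (2^m * (2 * rr i))) := by
          simp only [hgg]
          congr 3
          omega
        have hzero : B i m = 0 := by
          simp only [hB, hgm, hg1, sub_self, map_zero, norm_zero]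
        rw [hzero]
        exact norm_nonneg _
      · have hgm : g i m = XX (d (2^m * (2 * rr i + 1))) := by
          simp only [hgg]
          congr 3
          omega
        simp only [hB, hgm, hg1]
        exact le_refl _
    have hmink := minkowski_iter S hp (M+1) B hBnn
    have hstep2 : ∀ m ∈ Finset.range (M+1), (∑ i ∈ S, (B i m) ^ p) ^ (1/p) ≤ 1 := by
      intro m _
      exact Real.rpow_le_one (by positivity) (hscale m) (by positivity)
    have hL : (∑ i ∈ S, (∑ m ∈ Finset.range (M+1), B i m) ^ p) ^ (1/p)
        ≤ ((M+1 : ℕ) : ℝ) := by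
      calc (∑ i ∈ S, (∑ m ∈ Finset.range (M+1), B i m) ^ p) ^ (1/p)
          ≤ ∑ m ∈ Finset.range (M+1), (∑ i ∈ S, (B i m) ^ p) ^ (1/p) := hmink
        _ ≤ ∑ _m ∈ Finset.range (M+1), (1:ℝ) := Finset.sum_le_sum hstep2
        _ = ((M+1 : ℕ) : ℝ) := by simp
    have hx : ∑ i ∈ S, (∑ m ∈ Finset.range (M+1), B i m) ^ p ≤ ((M+1 : ℕ) : ℝ) ^ p := by
      have hxnn : (0:ℝ) ≤ ∑ i ∈ S, (∑ m ∈ Finset.range (M+1), B i m) ^ p := by positivity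
      calc ∑ i ∈ S, (∑ m ∈ Finset.range (M+1), B i m) ^ p
          = ((∑ i ∈ S, (∑ m ∈ Finset.range (M+1), B i m) ^ p) ^ (1/p)) ^ p := by
            rw [← Real.rpow_mul hxnn, one_div_mul_cancel hp0.ne', Real.rpow_one]
        _ ≤ ((M+1 : ℕ) : ℝ) ^ p := Real.rpow_le_rpow (Real.rpow_nonneg hxnn _) hL hp0.le
    have hfinal : ∑ i ∈ S, ‖lam i (XX (n i))‖ ^ p ≤ ((M+1 : ℕ) : ℝ) ^ p :=
      le_trans (Finset.sum_le_sum fun i hi =>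
        Real.rpow_le_rpow (norm_nonneg _) (ham i hi) hp0.le) hx
    refine le_trans hfinal ?_
    apply Real.rpow_le_rpow (by positivity) ?_ hp0.le
    have hMc : M ≤ Nat.clog 2 S.card :=
      Nat.clog_mono_right 2 ((le_of_eq hs).trans Finset.card_image_le)
    exact_mod_cast Nat.succ_le_succ hMc


lemma clog_le_rpow {δ : ℝ} (hδ : 0 < δ) :
    ∃ c : ℝ, 1 ≤ c ∧ ∀ N : ℕ, 1 ≤ N → ((Nat.clog 2 N + 1 : ℕ) : ℝ) ≤ c * (N:ℝ) ^ δ := by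
  have hlog2 : 0 < Real.log 2 := Real.log_pos one_lt_two
  have hpos2 : 0 < 1/(δ * Real.log 2) := by positivity
  refine ⟨1/(δ * Real.log 2) + 2, by linarith, ?_⟩
  intro N hN
  have hN1 : (1:ℝ) ≤ (N:ℝ) := by exact_mod_cast hN
  have hNpos : (0:ℝ) < (N:ℝ) := by linarith
  have hrp1 : (1:ℝ) ≤ (N:ℝ) ^ δ := by
    calc (1:ℝ) = (1:ℝ) ^ δ := (Real.one_rpow δ).symm
      _ ≤ (N:ℝ) ^ δ := Real.rpow_le_rpow zero_le_one hN1 hδ.le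
  have hrppos : (0:ℝ) < (N:ℝ) ^ δ := by linarith
  have hclognat : Nat.clog 2 N ≤ Nat.log 2 N + 1 := by
    rcases Nat.lt_or_ge N 2 with h2 | h2
    · interval_cases N
      · simp
    · have h1N : 1 < N := by omega
      have hpred := Nat.pow_pred_clog_lt_self one_lt_two h1N
      have hle : 2 ^ (Nat.clog 2 N).pred ≤ N := le_of_lt hpred
      have := (Nat.le_log_iff_pow_le one_lt_two (by omega)).2 hle
      rw [Nat.pred_eq_sub_one] at this
      omega
  have hnatlogb : (Nat.log 2 N : ℝ) ≤ Real.logb 2 N := by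
    have hpow := Nat.pow_log_le_self 2 (show N ≠ 0 by omega)
    have hpowR : (2:ℝ) ^ ((Nat.log 2 N : ℕ) : ℝ) ≤ (N:ℝ) := by
      rw [Real.rpow_natCast]
      exact_mod_cast hpow
    exact (Real.le_logb_iff_rpow_le one_lt_two hNpos).2 hpowR
  have hlogN : Real.log N ≤ (N:ℝ) ^ δ / δ := by
    have h1 : δ * Real.log N = Real.log ((N:ℝ) ^ δ) := (Real.log_rpow hNpos δ).symm
    have h2 : Real.log ((N:ℝ) ^ δ) ≤ (N:ℝ) ^ δ - 1 := Real.log_le_sub_one_of_pos hrppos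
    rw [le_div_iff₀ hδ]
    nlinarith [h1, h2]
  have hlogb : Real.logb 2 N ≤ (N:ℝ) ^ δ / (δ * Real.log 2) := by
    rw [Real.logb, ← div_div]
    exact (div_le_div_iff_of_pos_right hlog2).2 hlogN
  have hcast : (Nat.clog 2 N : ℝ) ≤ (Nat.log 2 N : ℝ) + 1 := by exact_mod_cast hclognat
  have hexp : (1/(δ * Real.log 2) + 2) * (N:ℝ) ^ δ
      = (N:ℝ) ^ δ / (δ * Real.log 2) + 2 * (N:ℝ) ^ δ := by ring
  push_cast
  rw [hexp]
  linarith

lemma counting {p q : ℝ} (hp : 1 ≤ p) (hpq : p < q) :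
    ∃ C : ℝ, 0 ≤ C ∧ ∀ (k : ℕ) (a : Fin k → ℝ), (∀ i, 0 ≤ a i) → (∀ i, a i ≤ 1) →
      (∀ S : Finset (Fin k), ∑ i ∈ S, a i ^ p ≤ ((Nat.clog 2 S.card + 1 : ℕ) : ℝ) ^ p) →
      ∑ i, a i ^ q ≤ C := by
  classical
  have hp0 : 0 < p := lt_of_lt_of_le one_pos hp
  have hq0 : 0 < q := lt_trans hp0 hpq
  obtain ⟨δ, hδdef⟩ : ∃ δ : ℝ, δ = (q - p)/(2*p*q) := ⟨_, rfl⟩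
  have hδ : 0 < δ := by rw [hδdef]; exact div_pos (by linarith) (by positivity)
  obtain ⟨c, hc1, hc⟩ := clog_le_rpow hδ
  have hc0 : 0 < c := lt_of_lt_of_le one_pos hc1
  obtain ⟨γ, hγdef⟩ : ∃ γ : ℝ, γ = 1 - δ * p := ⟨_, rfl⟩
  have hδp : δ * p = (q-p)/(2*q) := by
    rw [hδdef]; field_simp
  have hγ : γ = (q+p)/(2*q) := by
    rw [hγdef, hδp]; field_simp; ring
  have hγ0 : 0 < γ := by rw [hγ]; positivity
  obtain ⟨ρ, hρdef⟩ : ∃ ρ : ℝ, ρ = 2*p*q/(p+q) := ⟨_, rfl⟩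
  have hρ0 : 0 < ρ := by rw [hρdef]; positivity
  have hγρ : γ * ρ = p := by
    rw [hγ, hρdef]; field_simp; ring
  have hρq : ρ < q := by
    rw [hρdef, div_lt_iff₀ (by positivity)]
    nlinarith
  have hpγρ : p * (1/γ) = ρ := by
    rw [mul_one_div, ← hγρ, mul_comm γ ρ, mul_div_assoc, div_self hγ0.ne', mul_one]
  obtain ⟨r, hrdef⟩ : ∃ r : ℝ, r = (2:ℝ) ^ (ρ - q) := ⟨_, rfl⟩
  have hr0 : 0 < r := hrdef ▸ Real.rpow_pos_of_pos two_pos _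
  have hr1 : r < 1 := by
    rw [hrdef]
    exact Real.rpow_lt_one_of_one_lt_of_neg one_lt_two (by linarith)
  obtain ⟨K, hKdef⟩ : ∃ K : ℝ, K = c ^ ρ * (2:ℝ) ^ ρ := ⟨_, rfl⟩
  have hK0 : 0 < K :=
    hKdef ▸ mul_pos (Real.rpow_pos_of_pos hc0 _) (Real.rpow_pos_of_pos two_pos _)
  refine ⟨K * (1/(1-r)), mul_nonneg hK0.le (one_div_nonneg.2 (by linarith)), ?_⟩
  intro k a h0 h1 hS
  set P : Finset (Fin k) := Finset.univ.filter (fun i => 0 < a i) with hP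
  have hsplit : ∑ i, a i ^ q = ∑ i ∈ P, a i ^ q := by
    refine (Finset.sum_subset (Finset.filter_subset _ _) ?_).symm
    intro i _ hiP
    have : ¬ (0 < a i) := by
      intro hcon
      exact hiP (Finset.mem_filter.2 ⟨Finset.mem_univ i, hcon⟩)
    have hai : a i = 0 := le_antisymm (not_lt.1 this) (h0 i)
    rw [hai, Real.zero_rpow hq0.ne']
  set jdx : Fin k → ℕ := fun i => ⌊Real.logb 2 (1 / a i)⌋₊ with hjdx
  set J : ℕ := (P.sup jdx) + 1 with hJ
  have hmaps : ∀ i ∈ P, jdx i ∈ Finset.range J := fun i hi =>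
    Finset.mem_range.2 (lt_of_le_of_lt (Finset.le_sup hi) (Nat.lt_succ_self _))
  rw [hsplit, ← Finset.sum_fiberwise_of_maps_to hmaps]
  have hfiber : ∀ j ∈ Finset.range J,
      ∑ i ∈ P.filter (fun i => jdx i = j), a i ^ q ≤ K * r ^ j := by
    intro j _
    set F := P.filter (fun i => jdx i = j) with hF
    set N := F.card with hNdef
    rcases Nat.eq_zero_or_pos N with hN0 | hN1
    · have hFe : F = ∅ := Finset.card_eq_zero.1 hN0
      rw [hFe, Finset.sum_empty]
      exact mul_nonneg hK0.le (pow_nonneg hr0.le j)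
    · have hmem : ∀ i ∈ F, 0 < a i ∧ jdx i = j := by
        intro i hi
        rw [hF, Finset.mem_filter] at hi
        rw [hP, Finset.mem_filter] at hi
        exact ⟨hi.1.2, hi.2⟩
      have hxge : ∀ i ∈ F, (1:ℝ) ≤ 1 / a i := by
        intro i hi
        rw [le_div_iff₀ (hmem i hi).1]
        simpa using h1 i
      have hlow : ∀ i ∈ F, (2:ℝ) ^ (-((j:ℝ)+1)) ≤ a i := by
        intro i hi
        obtain ⟨hai, hji⟩ := hmem i hi
        have hfl : Real.logb 2 (1 / a i) < (j:ℝ) + 1 := by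
          have h := Nat.lt_floor_add_one (Real.logb 2 (1 / a i))
          rw [show ⌊Real.logb 2 (1 / a i)⌋₊ = jdx i from rfl, hji] at h
          exact_mod_cast h
        have hx : 1 / a i < (2:ℝ) ^ ((j:ℝ)+1) :=
          (Real.logb_lt_iff_lt_rpow one_lt_two (by positivity)).1 hfl
        have h2 : 1 / ((2:ℝ) ^ ((j:ℝ)+1)) < 1 / (1 / a i) :=
          one_div_lt_one_div_of_lt (by positivity) hx
        rw [one_div_one_div] at h2
        rw [Real.rpow_neg (by norm_num), ← one_div]
        exact le_of_lt h2
      have hhigh : ∀ i ∈ F, a i ≤ (2:ℝ) ^ (-(j:ℝ)) := by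
        intro i hi
        obtain ⟨hai, hji⟩ := hmem i hi
        have hlb : ((j:ℝ)) ≤ Real.logb 2 (1 / a i) := by
          have h := Nat.floor_le (Real.logb_nonneg one_lt_two (hxge i hi))
          rw [show ⌊Real.logb 2 (1 / a i)⌋₊ = jdx i from rfl, hji] at h
          exact h
        have hx : (2:ℝ) ^ ((j:ℝ)) ≤ 1 / a i :=
          (Real.le_logb_iff_rpow_le one_lt_two (by positivity)).1 hlb
        have h2 : 1 / (1 / a i) ≤ 1 / ((2:ℝ) ^ ((j:ℝ))) :=
          one_div_le_one_div_of_le (by positivity) hx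
        rw [one_div_one_div] at h2
        rw [Real.rpow_neg (by norm_num), ← one_div]
        exact h2
      have hNR : (1:ℝ) ≤ (N:ℝ) := by exact_mod_cast hN1
      have hNpos : (0:ℝ) < (N:ℝ) := by linarith
      have hcount : (N:ℝ) * ((2:ℝ) ^ (-((j:ℝ)+1))) ^ p ≤ (c * (N:ℝ) ^ δ) ^ p := by
        calc (N:ℝ) * ((2:ℝ) ^ (-((j:ℝ)+1))) ^ p
            = ∑ _i ∈ F, ((2:ℝ) ^ (-((j:ℝ)+1))) ^ p := by
              rw [Finset.sum_const, nsmul_eq_mul, hNdef]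
          _ ≤ ∑ i ∈ F, a i ^ p := Finset.sum_le_sum fun i hi =>
              Real.rpow_le_rpow (by positivity) (hlow i hi) hp0.le
          _ ≤ ((Nat.clog 2 N + 1 : ℕ) : ℝ) ^ p := hS F
          _ ≤ (c * (N:ℝ) ^ δ) ^ p := Real.rpow_le_rpow (by positivity) (hc N hN1) hp0.le
      have hNbound : (N:ℝ) ≤ c ^ ρ * ((2:ℝ) ^ (((j:ℝ)+1) * ρ)) := by
        have hA : ((2:ℝ) ^ (-((j:ℝ)+1))) ^ p = (2:ℝ) ^ (-((j:ℝ)+1) * p) :=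
          (Real.rpow_mul (by norm_num) _ _).symm
        have hB : (c * (N:ℝ) ^ δ) ^ p = c ^ p * (N:ℝ) ^ (δ * p) := by
          rw [Real.mul_rpow hc0.le (by positivity), ← Real.rpow_mul hNpos.le]
        rw [hA, hB] at hcount
        have hxγ : (N:ℝ) ^ γ ≤ c ^ p * (2:ℝ) ^ (((j:ℝ)+1) * p) := by
          have hsp : (N:ℝ) ^ γ = (N:ℝ) * ((N:ℝ) ^ (δ * p))⁻¹ := by
            rw [hγdef, Real.rpow_sub hNpos, Real.rpow_one, div_eq_mul_inv]
          rw [hsp]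
          rw [mul_inv_le_iff₀ (by positivity), mul_comm _ ((N:ℝ) ^ (δ * p))]
          calc (N:ℝ) = ((N:ℝ) * (2:ℝ) ^ (-((j:ℝ)+1) * p)) * (2:ℝ) ^ (((j:ℝ)+1) * p) := by
                rw [mul_assoc, ← Real.rpow_add two_pos,
                  show -((j:ℝ)+1) * p + ((j:ℝ)+1) * p = 0 by ring,
                  Real.rpow_zero, mul_one]
            _ ≤ (c ^ p * (N:ℝ) ^ (δ * p)) * (2:ℝ) ^ (((j:ℝ)+1) * p) := by
                apply mul_le_mul_of_nonneg_right hcount (by positivity)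
            _ = (N:ℝ) ^ (δ * p) * (c ^ p * (2:ℝ) ^ (((j:ℝ)+1) * p)) := by ring
        have hN2 : (N:ℝ) = ((N:ℝ) ^ γ) ^ (1/γ) := by
          rw [← Real.rpow_mul hNpos.le, mul_one_div, div_self hγ0.ne', Real.rpow_one]
        rw [hN2]
        calc ((N:ℝ) ^ γ) ^ (1/γ) ≤ (c ^ p * (2:ℝ) ^ (((j:ℝ)+1) * p)) ^ (1/γ) :=
              Real.rpow_le_rpow (Real.rpow_nonneg hNpos.le _) hxγ (one_div_nonneg.2 hγ0.le)
          _ = c ^ ρ * ((2:ℝ) ^ (((j:ℝ)+1) * ρ)) := by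
              rw [Real.mul_rpow (by positivity) (by positivity),
                ← Real.rpow_mul hc0.le, ← Real.rpow_mul (by norm_num),
                hpγρ, mul_assoc, hpγρ]
      calc ∑ i ∈ F, a i ^ q ≤ ∑ _i ∈ F, ((2:ℝ) ^ (-(j:ℝ))) ^ q :=
            Finset.sum_le_sum fun i hi =>
              Real.rpow_le_rpow (h0 i) (hhigh i hi) hq0.le
        _ = (N:ℝ) * ((2:ℝ) ^ (-(j:ℝ))) ^ q := by
            rw [Finset.sum_const, nsmul_eq_mul, hNdef]
        _ ≤ (c ^ ρ * ((2:ℝ) ^ (((j:ℝ)+1) * ρ))) * ((2:ℝ) ^ (-(j:ℝ))) ^ q := by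
            apply mul_le_mul_of_nonneg_right hNbound (by positivity)
        _ = K * r ^ j := by
            rw [hKdef, hrdef, ← Real.rpow_natCast ((2:ℝ) ^ (ρ - q)) j,
              ← Real.rpow_mul (by norm_num : (0:ℝ) ≤ 2) (ρ - q) (j:ℝ),
              ← Real.rpow_mul (by norm_num : (0:ℝ) ≤ 2) (-(j:ℝ)) q,
              mul_assoc, ← Real.rpow_add two_pos, mul_assoc, ← Real.rpow_add two_pos]
            congr 1
            ring
  calc ∑ j ∈ Finset.range J, ∑ i ∈ P.filter (fun i => jdx i = j), a i ^ q
      ≤ ∑ j ∈ Finset.range J, K * r ^ j := Finset.sum_le_sum hfiber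
    _ = K * ∑ j ∈ Finset.range J, r ^ j := by rw [Finset.mul_sum]
    _ ≤ K * (1/(1-r)) := by
        apply mul_le_mul_of_nonneg_left ?_ hK0.le
        rw [geom_sum_eq hr1.ne J]
        rw [show (r ^ J - 1)/(r - 1) = (1 - r ^ J)/(1 - r) by
          rw [← neg_div_neg_eq]; ring_nf]
        rw [div_le_div_iff₀ (by linarith) (by linarith)]
        have hrJ : 0 ≤ r ^ J := pow_nonneg hr0.le J
        nlinarith

lemma norm_XX_le (n : ℕ) : ‖XX n‖ ≤ 1 := by
  rw [← ZeroAtInftyContinuousMap.norm_toBCF_eq_norm]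
  refine (BoundedContinuousFunction.norm_le zero_le_one).2 fun m => ?_
  show ‖XX n m‖ ≤ 1
  rw [XX_apply]
  split_ifs <;> simp

noncomputable def muPNaux {E : Type*} [NormedAddCommGroup E] [NormedSpace ℂ E]
    (p : ℝ) {n : ℕ} (lam : Fin n → StrongDual ℂ E) : ℝ :=
  sSup {r : ℝ | ∃ x : E, ‖x‖ ≤ 1 ∧ r = (∑ i, ‖lam i x‖ ^ p) ^ (1 / p)}

/-- From the weak summing-norm bound to the pointwise hypothesis `H`. -/
lemma H_of_muPN {k : ℕ} {p : ℝ} (hp : 1 ≤ p) (lam : Fin k → StrongDual ℂ C₀(ℕ, ℂ))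
    (hmu : muPNaux p lam ≤ 1) :
    ∀ y : C₀(ℕ, ℂ), ‖y‖ ≤ 1 → ∑ i, ‖lam i y‖ ^ p ≤ 1 := by
  have hp0 : 0 < p := lt_of_lt_of_le one_pos hp
  intro y hy
  have hbdd : BddAbove {r : ℝ | ∃ x : C₀(ℕ, ℂ), ‖x‖ ≤ 1 ∧
      r = (∑ i, ‖lam i x‖ ^ p) ^ (1 / p)} := by
    refine ⟨(∑ i, ‖lam i‖ ^ p) ^ (1/p), ?_⟩
    rintro w' ⟨z, hz, rfl⟩
    apply Real.rpow_le_rpow (by positivity) ?_ (by positivity)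
    refine Finset.sum_le_sum fun i _ => Real.rpow_le_rpow (norm_nonneg _) ?_ hp0.le
    calc ‖lam i z‖ ≤ ‖lam i‖ * ‖z‖ := (lam i).le_opNorm z
      _ ≤ ‖lam i‖ * 1 := mul_le_mul_of_nonneg_left hz (by positivity)
      _ = ‖lam i‖ := mul_one _
  have hel : (∑ i, ‖lam i y‖ ^ p) ^ (1/p) ≤ muPNaux p lam :=
    le_csSup hbdd ⟨y, hy, rfl⟩
  have h1 : (∑ i, ‖lam i y‖ ^ p) ^ (1/p) ≤ 1 := le_trans hel hmu
  have hnn : (0:ℝ) ≤ ∑ i, ‖lam i y‖ ^ p := by positivity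
  calc ∑ i, ‖lam i y‖ ^ p = ((∑ i, ‖lam i y‖ ^ p) ^ (1/p)) ^ p := by
        rw [← Real.rpow_mul hnn, one_div_mul_cancel hp0.ne', Real.rpow_one]
    _ ≤ 1 := Real.rpow_le_one (Real.rpow_nonneg hnn _) h1 hp0.le

/-- Evaluation at a point as a continuous linear functional on `c₀`. -/
noncomputable def evC (j : ℕ) : C₀(ℕ, ℂ) →L[ℂ] ℂ :=
  LinearMap.mkContinuous
    { toFun := fun g => g j
      map_add' := fun f g => by simp
      map_smul' := fun c f => by simp }
    1 (fun g => by
      rw [one_mul, ← ZeroAtInftyContinuousMap.norm_toBCF_eq_norm]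
      exact g.toBCF.norm_coe_le_norm j)

lemma evC_apply (j : ℕ) (g : C₀(ℕ, ℂ)) : evC j g = g j := rfl

end PSaux

/-- in `c₀`, the set of partial sums `xₙ = δ₁ + ⋯ + δₙ` of the standard
basis is `(p,q)`-multi-bounded for every `1 ≤ p < q < ∞`, but it is not relatively
weakly compact. -/
theorem partial_sums_multibounded_not_weakly_compact :
    (∀ p q : ℝ, 1 ≤ p → p < q →
      ∃ C : ℝ, ∀ (k : ℕ) (x : Fin k → C₀(ℕ, ℂ)),
        (∀ i, x i ∈ {y : C₀(ℕ, ℂ) | ∃ n : ℕ, 1 ≤ n ∧ y = ∑ j ∈ Finset.range n, c0delta j}) →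
        pqNorm p q x ≤ C) ∧
    ¬ IsCompact (closure (toWeakSpace ℂ C₀(ℕ, ℂ) ''
        {y : C₀(ℕ, ℂ) | ∃ n : ℕ, 1 ≤ n ∧ y = ∑ j ∈ Finset.range n, c0delta j})) := by
  constructor
  · intro p q hp hpq
    obtain ⟨C0, hC00, hC0⟩ := PSaux.counting hp hpq
    have hp0 : 0 < p := lt_of_lt_of_le one_pos hp
    have hq0 : 0 < q := lt_trans hp0 hpq
    refine ⟨C0 ^ (1/q), ?_⟩
    intro k x hx
    rw [pqNorm]
    apply Real.sSup_le ?_ (Real.rpow_nonneg hC00 _)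
    rintro w ⟨lam, hmu, rfl⟩
    have H := PSaux.H_of_muPN hp lam hmu
    choose n hn1 hxn using hx
    have hXn : ∀ i, x i = PSaux.XX (n i) := fun i => hxn i
    have h0 : ∀ i, 0 ≤ ‖lam i (PSaux.XX (n i))‖ := fun i => norm_nonneg _
    have h1a : ∀ i, ‖lam i (PSaux.XX (n i))‖ ≤ 1 := by
      intro i
      have h := H (PSaux.XX (n i)) (PSaux.norm_XX_le (n i))
      have hterm : ‖lam i (PSaux.XX (n i))‖ ^ p ≤ 1 :=
        le_trans (Finset.single_le_sum
          (f := fun i' => ‖lam i' (PSaux.XX (n i))‖ ^ p)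
          (fun i' _ => Real.rpow_nonneg (norm_nonneg _) _) (Finset.mem_univ i)) h
      calc ‖lam i (PSaux.XX (n i))‖
          = ((‖lam i (PSaux.XX (n i))‖ ^ p) ^ (1/p)) := by
            rw [← Real.rpow_mul (norm_nonneg _), mul_one_div, div_self hp0.ne',
              Real.rpow_one]
        _ ≤ 1 := Real.rpow_le_one (Real.rpow_nonneg (norm_nonneg _) _) hterm
            (by positivity)
    have hsum : ∑ i, ‖lam i (PSaux.XX (n i))‖ ^ q ≤ C0 :=
      hC0 k _ h0 h1a (fun S => PSaux.keyLemma lam hp H n S)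
    have hrw : ∑ i, ‖lam i (x i)‖ ^ q = ∑ i, ‖lam i (PSaux.XX (n i))‖ ^ q :=
      Finset.sum_congr rfl fun i _ => by rw [hXn i]
    rw [hrw]
    exact Real.rpow_le_rpow (by positivity) hsum (by positivity)
  · intro hK
    set A : Set C₀(ℕ, ℂ) :=
      {y | ∃ n : ℕ, 1 ≤ n ∧ y = ∑ j ∈ Finset.range n, c0delta j} with hA
    set u : ℕ → WeakSpace ℂ C₀(ℕ, ℂ) :=
      fun m => toWeakSpace ℂ C₀(ℕ, ℂ) (PSaux.XX (m+1)) with hu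
    have humem : ∀ m, u m ∈ closure (toWeakSpace ℂ C₀(ℕ, ℂ) '' A) := fun m =>
      subset_closure ⟨PSaux.XX (m+1), ⟨m+1, Nat.le_add_left 1 m, rfl⟩, rfl⟩
    have hle : Filter.map u Filter.atTop
        ≤ Filter.principal (closure (toWeakSpace ℂ C₀(ℕ, ℂ) '' A)) := by
      rw [Filter.le_principal_iff, Filter.mem_map]
      exact Filter.Eventually.of_forall humem
    obtain ⟨y, -, hy⟩ := hK.exists_clusterPt hle
    set z : C₀(ℕ, ℂ) := (toWeakSpace ℂ C₀(ℕ, ℂ)).symm y with hzdef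
    have hz1 : ∀ j : ℕ, z j = 1 := by
      intro j
      set g : WeakSpace ℂ C₀(ℕ, ℂ) → ℂ :=
        fun w => PSaux.evC j ((toWeakSpace ℂ C₀(ℕ, ℂ)).symm w) with hg
      have hgcont : Continuous g :=
        WeakBilin.eval_continuous ((topDualPairing ℂ C₀(ℕ, ℂ)).flip)
          (PSaux.evC j)
      have hmap : Filter.Tendsto g (Filter.map u Filter.atTop) (𝓝 1) := by
        rw [Filter.tendsto_map'_iff]
        apply Filter.Tendsto.congr' ?_ tendsto_const_nhds
        rw [Filter.eventuallyEq_iff_exists_mem]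
        refine ⟨{m | j ≤ m}, Filter.mem_atTop j, ?_⟩
        intro m hm
        show (1:ℂ) = g (u m)
        have hgu : g (u m) = PSaux.XX (m+1) j := by
          show PSaux.evC j ((toWeakSpace ℂ C₀(ℕ, ℂ)).symm
            (toWeakSpace ℂ C₀(ℕ, ℂ) (PSaux.XX (m+1)))) = _
          rw [LinearEquiv.symm_apply_apply]
          rfl
        rw [hgu, PSaux.XX_apply, if_pos (Nat.lt_succ_of_le hm)]
      have hclu : ClusterPt (g y) (𝓝 1) := hy.map hgcont.continuousAt hmap
      have : g y = 1 := eq_of_nhds_neBot hclu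
      exact this
    have hz0 := z.zero_at_infty'
    rw [Filter.cocompact_eq_cofinite] at hz0
    have hev : ∀ᶠ m in Filter.cofinite, ‖z m‖ < 1 := by
      have h := NormedAddCommGroup.tendsto_nhds_zero.mp hz0 1 one_pos
      exact h
    obtain ⟨m, hm⟩ := hev.exists
    rw [hz1 m] at hm
    norm_num at hm
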